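/- Let H be a complex Hilbert space, let N be an invertible bounded linear operator on H with bounded inverse N⁻¹, let M be a closed subspace of H, and let ξ ∈ H be orthogonal to N(M), i.e. ⟨ξ, N μ⟩ = 0 for every μ ∈ M. Write N⁻¹ ξ = ξ₁ + ξ₂ with ξ₁ ∈ M and ξ₂ ∈ M^⊥. Then ‖ξ₁‖ ≤ ‖N‖ · ‖N⁻¹‖ · ‖ξ₂‖. -/

import Mathlib

open ContinuousLinearMap

/-- Let `N` be an invertible bounded operator on a complex Hilbert
space `H` with bounded inverse `N⁻¹`, `M ⊆ H` a closed subspace, and `ξ ∈ H` orthogonal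
to `N(M)`.  If `N⁻¹ ξ = ξ₁ + ξ₂` with `ξ₁ ∈ M`, `ξ₂ ∈ M^⊥`, then
`‖ξ₁‖ ≤ ‖N‖ ‖N⁻¹‖ ‖ξ₂‖`. -/
theorem stmt_15 {H : Type*} [NormedAddCommGroup H] [InnerProductSpace ℂ H]
    (N Ninv : H →L[ℂ] H) (h₁ : N * Ninv = 1) (h₂ : Ninv * N = 1)
    (M : Submodule ℂ H) (hM : IsClosed (M : Set H))
    (ξ ξ₁ ξ₂ : H) (hperp : ∀ μ ∈ M, (inner ℂ ξ (N μ) : ℂ) = 0)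
    (hξ₁ : ξ₁ ∈ M) (hξ₂ : ξ₂ ∈ Mᗮ) (hsum : Ninv ξ = ξ₁ + ξ₂) :
    ‖ξ₁‖ ≤ ‖N‖ * ‖Ninv‖ * ‖ξ₂‖ := by
  have hNNi : ∀ x, N (Ninv x) = x := fun x => by
    have := congrArg (fun T : H →L[ℂ] H => T x) h₁
    simpa using this
  have hNiN : ∀ x, Ninv (N x) = x := fun x => by
    have := congrArg (fun T : H →L[ℂ] H => T x) h₂
    simpa using this
  have hξ : ξ = N ξ₁ + N ξ₂ := by
    rw [← hNNi ξ, hsum, map_add]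
  have h0 : (inner ℂ ξ (N ξ₁) : ℂ) = 0 := hperp ξ₁ hξ₁
  rw [hξ, inner_add_left] at h0
  have key : (inner ℂ (N ξ₁) (N ξ₁) : ℂ) = - inner ℂ (N ξ₂) (N ξ₁) := by
    linear_combination h0
  have hsq : (‖N ξ₁‖ : ℝ)^2 ≤ ‖N ξ₂‖ * ‖N ξ₁‖ := by
    have h1 : (‖N ξ₁‖ : ℝ)^2 = ‖(inner ℂ (N ξ₂) (N ξ₁) : ℂ)‖ := by
      have keq : (inner ℂ (N ξ₂) (N ξ₁) : ℂ) = - inner ℂ (N ξ₁) (N ξ₁) := by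
        linear_combination h0
      rw [keq, norm_neg, @inner_self_eq_norm_sq_to_K ℂ]
      simp
    rw [h1]
    exact norm_inner_le_norm _ _
  have h2 : ‖N ξ₁‖ ≤ ‖N ξ₂‖ := by
    rcases eq_or_lt_of_le (norm_nonneg (N ξ₁)) with h | h
    · rw [← h]; exact norm_nonneg _
    · nlinarith
  calc ‖ξ₁‖ = ‖Ninv (N ξ₁)‖ := by rw [hNiN]
    _ ≤ ‖Ninv‖ * ‖N ξ₁‖ := le_opNorm _ _
    _ ≤ ‖Ninv‖ * (‖N‖ * ‖ξ₂‖) := by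
        have := le_opNorm N ξ₂
        have hle : ‖N ξ₁‖ ≤ ‖N‖ * ‖ξ₂‖ := le_trans h2 this
        exact mul_le_mul_of_nonneg_left hle (norm_nonneg _)
    _ = ‖N‖ * ‖Ninv‖ * ‖ξ₂‖ := by ring
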